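/- For positive integers n and nonnegative integers k_1, ..., k_n with k_1 + 2k_2 + ... + n·k_n = n, the rational number n!·(k_1 + ... + k_n − 1)! / (1!^{k_1} ··· n!^{k_n} · k_1! ··· k_n!) is an integer. -/

import Mathlib

open Finset Nat

private lemma stmt8_aux : ∀ n : ℕ, ∀ k : ℕ → ℕ,
    (∑ i ∈ Finset.Icc 1 n, i * k i = n) →
    (∏ i ∈ Finset.Icc 1 n, (Nat.factorial i) ^ (k i) * (k i).factorial)
      ∣ n.factorial * ((∑ i ∈ Finset.Icc 1 n, k i) - 1).factorial := by
  intro n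
  induction n using Nat.strong_induction_on with
  | _ n IH =>
    intro k hsum
    rcases Nat.eq_zero_or_pos n with hn0 | hn
    · subst hn0; simp
    -- write n = m + 1
    obtain ⟨m, rfl⟩ : ∃ m, n = m + 1 := ⟨n - 1, (Nat.succ_pred_eq_of_pos hn).symm⟩
    set n := m + 1 with hndef
    set K := ∑ i ∈ Finset.Icc 1 n, k i with hK
    -- n! * (K-1)! = ∑ i, i * k i * (m! * (K-1)!)
    have hfac : n.factorial * (K - 1).factorial
        = ∑ i ∈ Finset.Icc 1 n, i * k i * (m.factorial * (K - 1).factorial) := by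
      rw [← Finset.sum_mul, hsum]
      rw [show n.factorial = n * m.factorial from rfl]
      ring
    rw [hfac]
    apply Finset.dvd_sum
    intro i hi
    rcases Nat.eq_zero_or_pos (k i) with h0 | hki
    · simp [h0]
    obtain ⟨hi1, hin⟩ := Finset.mem_Icc.mp hi
    obtain ⟨c, hc⟩ : ∃ c, k i = c + 1 := ⟨k i - 1, (Nat.succ_pred_eq_of_pos hki).symm⟩
    -- i * k i ≤ n
    have hikn : i * k i ≤ n := hsum ▸ Finset.single_le_sum
      (f := fun j => j * k j) (fun j _ => Nat.zero_le _) hi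
    have hiln : i ≤ n := le_trans (Nat.le_mul_of_pos_right i hki) hikn
    set k' : ℕ → ℕ := Function.update k i c with hk'
    have hk'erase : ∀ j ∈ (Finset.Icc 1 n).erase i, k' j = k j := by
      intro j hj
      exact Function.update_of_ne (Finset.mem_erase.mp hj).1 _ _
    -- sum with k' over full range
    have hsum'full : ∑ j ∈ Finset.Icc 1 n, j * k' j = n - i := by
      have e1 : ∑ j ∈ Finset.Icc 1 n, j * k' j
          = i * c + ∑ j ∈ (Finset.Icc 1 n).erase i, j * k j := by
        rw [← Finset.add_sum_erase _ (fun j => j * k' j) hi]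
        congr 1
        · simp [hk']
        · exact Finset.sum_congr rfl (fun j hj => by rw [hk'erase j hj])
      have e2 : i * k i + ∑ j ∈ (Finset.Icc 1 n).erase i, j * k j = n := by
        rw [Finset.add_sum_erase _ (fun j => j * k j) hi]; exact hsum
      rw [hc] at e2
      have : i * (c + 1) = i * c + i := by ring
      omega
    have hK'full : ∑ j ∈ Finset.Icc 1 n, k' j = K - 1 := by
      have e1 : ∑ j ∈ Finset.Icc 1 n, k' j
          = c + ∑ j ∈ (Finset.Icc 1 n).erase i, k j := by
        rw [← Finset.add_sum_erase _ k' hi]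
        congr 1
        · simp [hk']
        · exact Finset.sum_congr rfl (fun j hj => by rw [hk'erase j hj])
      have e2 : k i + ∑ j ∈ (Finset.Icc 1 n).erase i, k j = K := by
        rw [hK, Finset.add_sum_erase _ k hi]
      rw [hc] at e2
      omega
    have hK1 : 1 ≤ K := by
      have : k i ≤ K := Finset.single_le_sum (f := k) (fun j _ => Nat.zero_le _) hi
      omega
    -- k' j = 0 for j > n - i
    have hzero : ∀ j ∈ Finset.Icc 1 n, n - i < j → k' j = 0 := by
      intro j hj hlt
      by_contra h
      have hj1 : 1 ≤ k' j := Nat.pos_of_ne_zero h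
      have : j * k' j ≤ n - i := hsum'full ▸ Finset.single_le_sum
        (f := fun j => j * k' j) (fun j _ => Nat.zero_le _) hj
      have : j ≤ j * k' j := Nat.le_mul_of_pos_right j hj1
      omega
    have hsubset : Finset.Icc 1 (n - i) ⊆ Finset.Icc 1 n :=
      Finset.Icc_subset_Icc_right (Nat.sub_le n i)
    have houtside : ∀ j ∈ Finset.Icc 1 n, j ∉ Finset.Icc 1 (n - i) → k' j = 0 := by
      intro j hj hnj
      obtain ⟨h1, h2⟩ := Finset.mem_Icc.mp hj
      have : n - i < j := by
        by_contra h
        exact hnj (Finset.mem_Icc.mpr ⟨h1, by omega⟩)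
      exact hzero j hj this
    -- restricted versions
    have hsum'res : ∑ j ∈ Finset.Icc 1 (n - i), j * k' j = n - i := by
      have h := Finset.sum_subset hsubset (f := fun j => j * k' j)
        (fun j hj hnj => by show j * k' j = 0; rw [houtside j hj hnj, mul_zero])
      rw [h, hsum'full]
    have hKres : ∑ j ∈ Finset.Icc 1 (n - i), k' j = K - 1 := by
      have h := Finset.sum_subset hsubset (f := k')
        (fun j hj hnj => houtside j hj hnj)
      rw [h, hK'full]
    have hprodres : ∏ j ∈ Finset.Icc 1 (n - i), (Nat.factorial j) ^ (k' j) * (k' j).factorial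
        = ∏ j ∈ Finset.Icc 1 n, (Nat.factorial j) ^ (k' j) * (k' j).factorial :=
      Finset.prod_subset hsubset (fun j hj hnj => by rw [houtside j hj hnj]; simp)
    -- apply IH at n - i
    have hlt : n - i < n := by omega
    have hIH := IH (n - i) hlt k' hsum'res
    rw [hprodres, hKres] at hIH
    -- hIH : ∏ j ∈ Icc 1 n, j!^(k' j) * (k' j)! ∣ (n-i)! * (K - 1 - 1)!
    set D' := ∏ j ∈ Finset.Icc 1 n, (Nat.factorial j) ^ (k' j) * (k' j).factorial with hD'
    -- factor D
    have hDfactor : ∏ j ∈ Finset.Icc 1 n, (Nat.factorial j) ^ (k j) * (k j).factorial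
        = i * (i - 1).factorial * (k i) * D' := by
      rw [hD', ← Finset.mul_prod_erase _ _ hi, ← Finset.mul_prod_erase _ _ hi]
      have herase : ∏ j ∈ (Finset.Icc 1 n).erase i,
          (Nat.factorial j) ^ (k' j) * (k' j).factorial
          = ∏ j ∈ (Finset.Icc 1 n).erase i,
          (Nat.factorial j) ^ (k j) * (k j).factorial :=
        Finset.prod_congr rfl (fun j hj => by rw [hk'erase j hj])
      rw [herase]
      have hki' : k' i = c := by simp [hk']
      rw [hki', hc]
      have hifac : i.factorial = i * (i - 1).factorial := by
        obtain ⟨d, rfl⟩ : ∃ d, i = d + 1 := ⟨i - 1, (Nat.succ_pred_eq_of_pos hi1).symm⟩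
        simp [Nat.factorial_succ]
      rw [pow_succ, Nat.factorial_succ]
      rw [hifac]
      ring
    rw [hDfactor]
    -- binomial: (n-1)! = C(n-1, i-1) * ((i-1)! * (n-i)!)
    have hchoose : Nat.choose m (i - 1) * (i - 1).factorial * (n - i).factorial
        = m.factorial := by
      have h1 : i - 1 ≤ m := by omega
      have h2 : m - (i - 1) = n - i := by omega
      rw [← h2]
      exact Nat.choose_mul_factorial_mul_factorial h1
    -- (K-2)! ∣ (K-1)!
    have hfd : (K - 1 - 1).factorial ∣ (K - 1).factorial :=
      Nat.factorial_dvd_factorial (Nat.sub_le _ _)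
    -- assemble
    have key : D' ∣ (n - i).factorial * (K - 1).factorial :=
      dvd_trans hIH (mul_dvd_mul_left _ hfd)
    calc i * (i - 1).factorial * (k i) * D'
        ∣ i * (i - 1).factorial * (k i) * ((n - i).factorial * (K - 1).factorial) :=
          mul_dvd_mul_left _ key
      _ ∣ Nat.choose m (i - 1) * (i * (i - 1).factorial * (k i)
            * ((n - i).factorial * (K - 1).factorial)) := dvd_mul_left _ _
      _ = i * k i * (m.factorial * (K - 1).factorial) := by
          rw [← hchoose]; ring

/-- if `k_1 + 2k_2 + … + n·k_n = n` then
`n!·(k_1+…+k_n-1)! / (1!^{k_1}···n!^{k_n}·k_1!···k_n!)` is an integer, i.e. the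
denominator divides the numerator. -/
theorem stmt8 (n : ℕ) (hn : 1 ≤ n) (k : ℕ → ℕ)
    (hsum : ∑ i ∈ Finset.Icc 1 n, i * k i = n) :
    (∏ i ∈ Finset.Icc 1 n, (Nat.factorial i) ^ (k i) * (k i).factorial)
      ∣ n.factorial * ((∑ i ∈ Finset.Icc 1 n, k i) - 1).factorial := by
  exact stmt8_aux n k hsum
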